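/- Let p be a positive integer and let A, B be disjoint finite sets with ground set X = A ∪ B. Define I ⊆ 2^X by: S ∈ I if and only if |S ∩ A| + p·|S ∩ B| ≤ |A| or p·|S ∩ A| + |S ∩ B| ≤ |B|. Then (X, I) is a downward-closed independence system and it is p-extendible. -/

import Mathlib

open Finset

/-- A downward-closed independence system on the finite type `α`. -/
def DownClosed {α : Type*} (I : Finset α → Prop) : Prop :=
  I ∅ ∧ ∀ A B : Finset α, I A → B ⊆ A → I B

/-- `(X, I)` is `p`-extendible: whenever `S ⊆ T`, `S, T ∈ I`, `e ∉ T` and `S ∪ {e} ∈ I`,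
there is `Z ⊆ T \ S` with `|Z| ≤ p` and `(T \ Z) ∪ {e} ∈ I`. -/
def Extendible {α : Type*} [DecidableEq α] (p : ℕ) (I : Finset α → Prop) : Prop :=
  ∀ S T : Finset α, ∀ e : α, S ⊆ T → I S → I T → e ∉ T → I (insert e S) →
    ∃ Z ⊆ T \ S, Z.card ≤ p ∧ I (insert e (T \ Z))

lemma sdiff_inter_comm' {α : Type*} [DecidableEq α] (T Z A : Finset α) :
    (T \ Z) ∩ A = (T ∩ A) \ Z := by
  ext x; simp; tauto

lemma key_lemma {α : Type*} [Fintype α] [DecidableEq α] (p : ℕ) (hp : 0 < p)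
    (A B : Finset α) (hdisj : Disjoint A B)
    (hground : (Finset.univ : Finset α) = A ∪ B)
    (S T : Finset α) (e : α) (hST : S ⊆ T)
    (hT : (T ∩ A).card + p * (T ∩ B).card ≤ A.card) (he : e ∉ T) :
    ∃ Z ⊆ T \ S, Z.card ≤ p ∧ (Z = T \ S ∨
      ((insert e (T \ Z)) ∩ A).card + p * ((insert e (T \ Z)) ∩ B).card ≤ A.card) := by
  have heAB : e ∈ A ∪ B := by rw [← hground]; exact mem_univ e
  rcases mem_union.mp heAB with heA | heB
  · -- e ∈ A, so e ∉ B
    have heB : e ∉ B := fun h => (Finset.disjoint_left.mp hdisj heA) h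
    by_cases h1 : (T ∩ A).card + 1 + p * (T ∩ B).card ≤ A.card
    · refine ⟨∅, by simp, by simp [hp.le], Or.inr ?_⟩
      rw [sdiff_empty, insert_inter_of_mem heA, insert_inter_of_notMem heB,
        card_insert_of_notMem (fun h => he (mem_of_mem_inter_left h))]
      omega
    · by_cases hTS : T \ S = ∅
      · exact ⟨∅, by simp, by simp [hp.le], Or.inl hTS.symm⟩
      · obtain ⟨z, hz⟩ := Finset.nonempty_iff_ne_empty.mpr hTS
        have hzT : z ∈ T := (mem_sdiff.mp hz).1
        refine ⟨{z}, singleton_subset_iff.mpr hz, by simp; omega, Or.inr ?_⟩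
        have hene : e ∉ T \ ({z} : Finset α) := fun h => he (mem_sdiff.mp h).1
        rw [insert_inter_of_mem heA, insert_inter_of_notMem heB,
          card_insert_of_notMem (fun h => hene (mem_of_mem_inter_left h)),
          sdiff_inter_comm', sdiff_inter_comm']
        have hzAB : z ∈ A ∪ B := by rw [← hground]; exact mem_univ z
        rcases mem_union.mp hzAB with hzA | hzB
        · have hzTA : z ∈ T ∩ A := mem_inter.mpr ⟨hzT, hzA⟩
          have hzB' : z ∉ B := fun h => (Finset.disjoint_left.mp hdisj hzA) h
          have h2 : (T ∩ B) \ {z} = T ∩ B := by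
            exact sdiff_eq_self_of_disjoint
              (disjoint_singleton_right.mpr fun h => hzB' (mem_of_mem_inter_right h))
          rw [h2, sdiff_singleton_eq_erase, card_erase_of_mem hzTA]
          have : 1 ≤ (T ∩ A).card := card_pos.mpr ⟨z, hzTA⟩
          omega
        · have hzTB : z ∈ T ∩ B := mem_inter.mpr ⟨hzT, hzB⟩
          have hzA' : z ∉ A := fun h => (Finset.disjoint_left.mp hdisj h) hzB
          have h2 : (T ∩ A) \ {z} = T ∩ A := by
            exact sdiff_eq_self_of_disjoint
              (disjoint_singleton_right.mpr fun h => hzA' (mem_of_mem_inter_right h))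
          rw [h2, sdiff_singleton_eq_erase, card_erase_of_mem hzTB]
          have h3 : 1 ≤ (T ∩ B).card := card_pos.mpr ⟨z, hzTB⟩
          obtain ⟨m, hm⟩ : ∃ m, (T ∩ B).card = m + 1 :=
            ⟨(T ∩ B).card - 1, (Nat.succ_pred_eq_of_pos h3).symm⟩
          have h4 : p * ((T ∩ B).card - 1) + p = p * (T ∩ B).card := by
            rw [hm]; simp [Nat.mul_succ]
          omega
  · -- e ∈ B, so e ∉ A
    have heA : e ∉ A := fun h => (Finset.disjoint_left.mp hdisj h) heB
    by_cases h1 : (T ∩ A).card + p * ((T ∩ B).card + 1) ≤ A.card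
    · refine ⟨∅, by simp, by simp [hp.le], Or.inr ?_⟩
      rw [sdiff_empty, insert_inter_of_notMem heA, insert_inter_of_mem heB,
        card_insert_of_notMem (fun h => he (mem_of_mem_inter_left h))]
      omega
    · by_cases hTS : (T \ S).card ≤ p
      · exact ⟨T \ S, Subset.refl _, hTS, Or.inl rfl⟩
      · push_neg at hTS
        by_cases hB : ((T \ S) ∩ B).Nonempty
        · obtain ⟨z, hz⟩ := hB
          have hzTS : z ∈ T \ S := mem_of_mem_inter_left hz
          have hzB : z ∈ B := mem_of_mem_inter_right hz
          have hzT : z ∈ T := (mem_sdiff.mp hzTS).1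
          have hzA' : z ∉ A := fun h => (Finset.disjoint_left.mp hdisj h) hzB
          refine ⟨{z}, singleton_subset_iff.mpr hzTS, by simp; omega, Or.inr ?_⟩
          have hene : e ∉ T \ ({z} : Finset α) := fun h => he (mem_sdiff.mp h).1
          rw [insert_inter_of_notMem heA, insert_inter_of_mem heB,
            card_insert_of_notMem (fun h => hene (mem_of_mem_inter_left h)),
            sdiff_inter_comm', sdiff_inter_comm']
          have hzTB : z ∈ T ∩ B := mem_inter.mpr ⟨hzT, hzB⟩
          have h2 : (T ∩ A) \ {z} = T ∩ A := by
            exact sdiff_eq_self_of_disjoint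
              (disjoint_singleton_right.mpr fun h => hzA' (mem_of_mem_inter_right h))
          rw [h2, sdiff_singleton_eq_erase, card_erase_of_mem hzTB]
          have h3 : 1 ≤ (T ∩ B).card := card_pos.mpr ⟨z, hzTB⟩
          obtain ⟨m, hm⟩ : ∃ m, (T ∩ B).card = m + 1 :=
            ⟨(T ∩ B).card - 1, (Nat.succ_pred_eq_of_pos h3).symm⟩
          have h4 : p * ((T ∩ B).card - 1 + 1) = p * (T ∩ B).card := by
            rw [Nat.sub_add_cancel h3]
          omega
        · -- T \ S ⊆ A
          have hsub : T \ S ⊆ A := by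
            intro x hx
            have hxAB : x ∈ A ∪ B := by rw [← hground]; exact mem_univ x
            rcases mem_union.mp hxAB with h | h
            · exact h
            · exact absurd (mem_inter.mpr ⟨hx, h⟩) (by
                rw [Finset.not_nonempty_iff_eq_empty] at hB
                simp [hB])
          obtain ⟨Z, hZsub, hZcard⟩ := Finset.exists_subset_card_eq hTS.le
          refine ⟨Z, hZsub, hZcard.le, Or.inr ?_⟩
          have hZA : Z ⊆ A := hZsub.trans hsub
          have hZTA : Z ⊆ T ∩ A := fun x hx =>
            mem_inter.mpr ⟨(mem_sdiff.mp (hZsub hx)).1, hZA hx⟩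
          have hene : e ∉ T \ Z := fun h => he (mem_sdiff.mp h).1
          rw [insert_inter_of_notMem heA, insert_inter_of_mem heB,
            card_insert_of_notMem (fun h => hene (mem_of_mem_inter_left h)),
            sdiff_inter_comm', sdiff_inter_comm']
          have h2 : (T ∩ B) \ Z = T ∩ B := by
            apply sdiff_eq_self_of_disjoint
            exact (Finset.disjoint_of_subset_right hZA hdisj.symm).mono_left
              (inter_subset_right)
          rw [h2, card_sdiff_of_subset hZTA, hZcard]
          have h3 : p ≤ (T ∩ A).card := hZcard ▸ card_le_card hZTA
          have h4 : p * ((T ∩ B).card + 1) = p * (T ∩ B).card + p := by ring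
          omega

/-- For disjoint `A, B` covering the ground set, the family
`I = {S : |S ∩ A| + p·|S ∩ B| ≤ |A| or p·|S ∩ A| + |S ∩ B| ≤ |B|}` is a downward-closed
independence system and is `p`-extendible. -/
theorem two_constraint_system_is_pExtendible
    {α : Type*} [Fintype α] [DecidableEq α] (p : ℕ) (hp : 0 < p)
    (A B : Finset α) (hdisj : Disjoint A B)
    (hground : (Finset.univ : Finset α) = A ∪ B)
    (I : Finset α → Prop)
    (hI : ∀ S : Finset α, I S ↔
      ((S ∩ A).card + p * (S ∩ B).card ≤ A.card ∨
       p * (S ∩ A).card + (S ∩ B).card ≤ B.card)) :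
    DownClosed I ∧ Extendible p I := by
  constructor
  · constructor
    · rw [hI]; left; simp
    · intro T S hT hSub
      rw [hI] at hT ⊢
      have hA : (S ∩ A).card ≤ (T ∩ A).card :=
        card_le_card (inter_subset_inter_right hSub)
      have hB : (S ∩ B).card ≤ (T ∩ B).card :=
        card_le_card (inter_subset_inter_right hSub)
      have h1 : p * (S ∩ A).card ≤ p * (T ∩ A).card := Nat.mul_le_mul_left p hA
      have h2 : p * (S ∩ B).card ≤ p * (T ∩ B).card := Nat.mul_le_mul_left p hB
      omega
  · intro S T e hST hS hT heT heS
    have hTS_eq : insert e (T \ (T \ S)) = insert e S := by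
      rw [sdiff_sdiff_right_self, inf_eq_inter, inter_eq_right.mpr hST]
    rcases (hI T).mp hT with hT1 | hT2
    · obtain ⟨Z, hZ, hcard, h⟩ := key_lemma p hp A B hdisj hground S T e hST hT1 heT
      refine ⟨Z, hZ, hcard, ?_⟩
      rcases h with rfl | h
      · rw [hTS_eq]; exact heS
      · rw [hI]; left; exact h
    · have hT2' : (T ∩ B).card + p * (T ∩ A).card ≤ B.card := by omega
      obtain ⟨Z, hZ, hcard, h⟩ := key_lemma p hp B A hdisj.symm
        (by rw [hground, union_comm]) S T e hST hT2' heT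
      refine ⟨Z, hZ, hcard, ?_⟩
      rcases h with rfl | h
      · rw [hTS_eq]; exact heS
      · rw [hI]; right; omega
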